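/- Jacobi's identity for minors: for an n×n matrix A over a commutative ring with n ≥ 2, det(A) · det(A with rows and columns 1 and n removed) = det(A with row and column 1 removed) · det(A with row and column n removed) − det(A with row 1 and column n removed) · det(A with row n and column 1 removed) — more precisely, ξ^{1..n}_{1..n} ξ^{2..n−1}_{2..n−1} = ξ^{2..n}_{2..n} ξ^{1..n−1}_{1..n−1} − ξ^{1..n−1}_{2..n} ξ^{2..n}_{1..n−1}. -/

import Mathlib

open Finset

noncomputable section

/-- The minor ξ^P_Q(A) of a square matrix: the determinant of the submatrix of `A`
with rows `P` and columns `Q`, each taken in increasing order (0 if `P.card ≠ Q.card`). -/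
def minor {n : ℕ} {α : Type*} [CommRing α] (A : Matrix (Fin n) (Fin n) α)
    (P Q : Finset (Fin n)) : α :=
  if h : P.card = Q.card then
    Matrix.det (Matrix.of fun i j : Fin P.card =>
      A (P.orderEmbOfFin rfl i) (Q.orderEmbOfFin h.symm j))
  else 0

/-- ε(K₁;K₂) = (−1)^{#{(i,j) ∈ K₁×K₂ : i > j}}. -/
def epsSign {n : ℕ} (K1 K2 : Finset (Fin n)) : ℤ :=
  (-1) ^ ((K1 ×ˢ K2).filter fun p => p.2 < p.1).card


lemma minor_eq_det {n k : ℕ} {α : Type*} [CommRing α] (A : Matrix (Fin n) (Fin n) α)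
    {P Q : Finset (Fin n)} (hP : P.card = k) (hQ : Q.card = k)
    {f g : Fin k → Fin n} (hf : StrictMono f) (hg : StrictMono g)
    (hfP : ∀ i, f i ∈ P) (hgQ : ∀ j, g j ∈ Q) :
    minor A P Q = (A.submatrix f g).det := by
  have hPQ : P.card = Q.card := hP.trans hQ.symm
  rw [minor, dif_pos hPQ]
  have h1 : (fun i : Fin P.card => f (finCongr hP i)) = P.orderEmbOfFin rfl :=
    Finset.orderEmbOfFin_unique rfl (fun i => hfP _) (hf.comp (fun a b h => h))
  have h2 : (fun j : Fin P.card => g (finCongr hP j)) = Q.orderEmbOfFin hPQ.symm :=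
    Finset.orderEmbOfFin_unique hPQ.symm (fun j => hgQ _) (hg.comp (fun a b h => h))
  rw [← Matrix.det_submatrix_equiv_self (finCongr hP) (A.submatrix f g)]
  congr 1
  ext i j
  simp [← congrFun h1 i, ← congrFun h2 j, Matrix.submatrix]

def midEmb (m : ℕ) : Fin m → Fin (m + 2) := fun p => p.succ.castSucc

lemma midEmb_strictMono (m : ℕ) : StrictMono (midEmb m) := by
  intro a b h
  simp [midEmb, Fin.lt_def, h]

lemma midEmb_ne_zero {m : ℕ} (p : Fin m) : midEmb m p ≠ 0 := by
  simp [midEmb, Fin.ext_iff]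

lemma midEmb_ne_last {m : ℕ} (p : Fin m) : midEmb m p ≠ Fin.last (m+1) := by
  have := p.isLt
  intro h
  have h2 := congrArg Fin.val h
  simp only [midEmb, Fin.coe_castSucc, Fin.val_succ, Fin.val_last] at h2
  omega

lemma midEmb_inj {m : ℕ} : Function.Injective (midEmb m) :=
  (midEmb_strictMono m).injective

def splitE (m : ℕ) : Fin 2 ⊕ Fin m ≃ Fin (m + 2) where
  toFun x := Sum.elim (fun b => if b = 0 then 0 else Fin.last (m+1)) (midEmb m) x
  invFun i := if h0 : i = 0 then Sum.inl 0 else if h : i = Fin.last (m+1) then Sum.inl 1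
    else Sum.inr ⟨i.val - 1, by
      have hl' : i.val ≠ m + 1 := fun hh => h (Fin.ext hh)
      have h0' : i.val ≠ 0 := fun hh => h0 (Fin.ext hh)
      have := i.isLt
      omega⟩
  left_inv x := by
    rcases x with b | p
    · fin_cases b <;> simp [(by simp [Fin.ext_iff] : (Fin.last (m+1) : Fin (m+2)) ≠ 0)]
    · have := p.isLt
      dsimp only [Sum.elim_inr]
      rw [dif_neg (midEmb_ne_zero p), dif_neg (midEmb_ne_last p)]
      congr 1
  right_inv i := by
    rcases eq_or_ne i 0 with rfl | h0
    · simp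
    · rcases eq_or_ne i (Fin.last (m+1)) with rfl | hl
      · simp [(by simp [Fin.ext_iff] : (Fin.last (m+1) : Fin (m+2)) ≠ 0)]
      · dsimp only
        rw [dif_neg h0, dif_neg hl, Sum.elim_inr]
        have h0' : i.val ≠ 0 := fun h => h0 (Fin.ext h)
        have hl' : i.val ≠ m + 1 := fun h => hl (Fin.ext h)
        have := i.isLt
        apply Fin.ext
        simp only [midEmb, Fin.coe_castSucc, Fin.val_succ]
        omega

lemma splitE_inl0 (m : ℕ) : splitE m (Sum.inl 0) = 0 := rfl
lemma splitE_inl1 (m : ℕ) : splitE m (Sum.inl 1) = Fin.last (m+1) := rfl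
lemma splitE_inr (m : ℕ) (p : Fin m) : splitE m (Sum.inr p) = midEmb m p := rfl


open Matrix in
lemma star {m : ℕ} {α : Type*} [CommRing α] (A : Matrix (Fin (m+2)) (Fin (m+2)) α) :
    A.det * (A.adjugate 0 0 * A.adjugate (Fin.last (m+1)) (Fin.last (m+1))
      - A.adjugate 0 (Fin.last (m+1)) * A.adjugate (Fin.last (m+1)) 0)
    = A.det * (A.det * (A.submatrix (midEmb m) (midEmb m)).det) := by
  classical
  have hl0 : (Fin.last (m+1) : Fin (m+2)) ≠ 0 := by
    simp [Fin.ext_iff]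
  set l : Fin (m+2) := Fin.last (m+1) with hldef
  set C : Matrix (Fin (m+2)) (Fin (m+2)) α := Matrix.of fun i j =>
    if j = 0 then A.adjugate i 0 else if j = l then A.adjugate i l
    else if i = j then 1 else 0 with hCdef
  have hC : C.det = A.adjugate 0 0 * A.adjugate l l - A.adjugate 0 l * A.adjugate l 0 := by
    rw [← Matrix.det_submatrix_equiv_self (splitE m) C]
    have hblock : C.submatrix (splitE m) (splitE m) =
        Matrix.fromBlocks
          !![A.adjugate 0 0, A.adjugate 0 l; A.adjugate l 0, A.adjugate l l] 0
          (Matrix.of fun p (b : Fin 2) =>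
            if b = 0 then A.adjugate (midEmb m p) 0 else A.adjugate (midEmb m p) l)
          (1 : Matrix (Fin m) (Fin m) α) := by
      ext i j
      rcases i with b | p <;> rcases j with c | q
      · fin_cases b <;> fin_cases c <;>
          simp [hCdef, splitE_inl0, splitE_inl1, Matrix.submatrix_apply, hl0, hldef]
      · fin_cases b <;>
          simp [hCdef, splitE_inl0, splitE_inl1, splitE_inr, Matrix.submatrix_apply,
            midEmb_ne_zero q, midEmb_ne_last q, (midEmb_ne_zero q).symm,
            (midEmb_ne_last q).symm, hl0.symm, hldef]
      · fin_cases c <;>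
          simp [hCdef, splitE_inl0, splitE_inl1, splitE_inr, Matrix.submatrix_apply, hldef]
      · simp only [hCdef, hldef, splitE_inr, Matrix.submatrix_apply, Matrix.of_apply,
          midEmb_ne_zero q, midEmb_ne_last q, if_neg, ite_false,
          Matrix.fromBlocks_apply₂₂]
        rw [Matrix.one_apply]
        by_cases h : p = q
        · simp [h]
        · simp only [h, ite_false]
          exact if_neg (fun hh => h (midEmb_inj hh))
    rw [hblock, Matrix.det_fromBlocks_zero₁₂, Matrix.det_one, mul_one, Matrix.det_fin_two]
    simp
  have hAC : ((A * C).submatrix (splitE m) (splitE m)) =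
      Matrix.fromBlocks (A.det • (1 : Matrix (Fin 2) (Fin 2) α))
        (Matrix.of fun (b : Fin 2) q => A (splitE m (Sum.inl b)) (midEmb m q)) 0
        (A.submatrix (midEmb m) (midEmb m)) := by
    have hcol0 : ∀ i, (A * C) i 0 = A.det * (if i = 0 then 1 else 0) := by
      intro i
      have : (A * C) i 0 = (A * A.adjugate) i 0 := by
        simp [Matrix.mul_apply, hCdef]
      rw [this, Matrix.mul_adjugate]
      simp [Matrix.one_apply]
    have hcoll : ∀ i, (A * C) i l = A.det * (if i = l then 1 else 0) := by
      intro i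
      have : (A * C) i l = (A * A.adjugate) i l := by
        simp [Matrix.mul_apply, hCdef, hl0]
      rw [this, Matrix.mul_adjugate]
      simp [Matrix.one_apply]
    have hcolm : ∀ i q, (A * C) i (midEmb m q) = A i (midEmb m q) := by
      intro i q
      simp [Matrix.mul_apply, hCdef, hldef, midEmb_ne_zero q, midEmb_ne_last q, mul_ite]
    ext i j
    rcases i with b | p <;> rcases j with c | q
    · fin_cases b <;> fin_cases c <;>
        simp [splitE_inl0, splitE_inl1, ← hldef, Matrix.submatrix_apply, hcol0, hcoll, hl0, hl0.symm,
          Matrix.one_apply, Matrix.smul_apply]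
    · fin_cases b <;>
        simp [splitE_inl0, splitE_inl1, splitE_inr, Matrix.submatrix_apply, hcolm]
    · fin_cases c <;>
        simp [splitE_inl0, splitE_inl1, ← hldef, splitE_inr, Matrix.submatrix_apply, hcol0, hcoll,
          midEmb_ne_zero p, midEmb_ne_last p]
      exact fun h => absurd (h.trans hldef) (midEmb_ne_last p)
    · simp [splitE_inr, Matrix.submatrix_apply, hcolm]
  have hdetAC : (A * C).det = A.det * (A.det * (A.submatrix (midEmb m) (midEmb m)).det) := by
    rw [← Matrix.det_submatrix_equiv_self (splitE m) (A * C), hAC,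
      Matrix.det_fromBlocks_zero₂₁, Matrix.det_smul, Matrix.det_one]
    simp [pow_two, mul_assoc]
  calc A.det * (A.adjugate 0 0 * A.adjugate l l - A.adjugate 0 l * A.adjugate l 0)
      = A.det * C.det := by rw [hC]
    _ = (A * C).det := (Matrix.det_mul A C).symm
    _ = A.det * (A.det * (A.submatrix (midEmb m) (midEmb m)).det) := hdetAC


open Matrix in
lemma star2 {m : ℕ} {α : Type*} [CommRing α] (A : Matrix (Fin (m+2)) (Fin (m+2)) α) :
    A.adjugate 0 0 * A.adjugate (Fin.last (m+1)) (Fin.last (m+1))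
      - A.adjugate 0 (Fin.last (m+1)) * A.adjugate (Fin.last (m+1)) 0
    = A.det * (A.submatrix (midEmb m) (midEmb m)).det := by
  classical
  set R := MvPolynomial (Fin (m+2) × Fin (m+2)) ℤ
  set G : Matrix (Fin (m+2)) (Fin (m+2)) R :=
    Matrix.of fun i j => MvPolynomial.X (i, j) with hGdef
  have hGdet : G.det ≠ 0 := by
    intro h
    have h2 := congrArg (MvPolynomial.eval (fun p : Fin (m+2) × Fin (m+2) =>
      if p.1 = p.2 then (1:ℤ) else 0)) h
    rw [RingHom.map_det] at h2
    have h3 : (MvPolynomial.eval (fun p : Fin (m+2) × Fin (m+2) =>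
        if p.1 = p.2 then (1:ℤ) else 0)).mapMatrix G = (1 : Matrix _ _ ℤ) := by
      ext i j
      simp [hGdef, Matrix.one_apply]
    rw [h3] at h2
    simp at h2
  have hgen : G.adjugate 0 0 * G.adjugate (Fin.last (m+1)) (Fin.last (m+1))
      - G.adjugate 0 (Fin.last (m+1)) * G.adjugate (Fin.last (m+1)) 0
      = G.det * (G.submatrix (midEmb m) (midEmb m)).det :=
    mul_left_cancel₀ hGdet (star G)
  set φ : R →+* α := MvPolynomial.eval₂Hom (Int.castRingHom α) (fun p => A p.1 p.2) with hφ
  have hφG : φ.mapMatrix G = A := by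
    ext i j
    show φ (G i j) = A i j
    rw [hGdef, hφ]
    exact MvPolynomial.eval₂Hom_X' _ _ _
  have key := congrArg φ hgen
  rw [map_sub, _root_.map_mul, _root_.map_mul, _root_.map_mul] at key
  have hadj : ∀ i j, φ (G.adjugate i j) = A.adjugate i j := by
    intro i j
    calc φ (G.adjugate i j) = (φ.mapMatrix G.adjugate) i j := rfl
      _ = ((φ.mapMatrix G).adjugate) i j := by rw [RingHom.map_adjugate]
      _ = A.adjugate i j := by rw [hφG]
  have hdet : φ G.det = A.det := by
    rw [RingHom.map_det, hφG]
  have hsub : φ (G.submatrix (midEmb m) (midEmb m)).det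
      = (A.submatrix (midEmb m) (midEmb m)).det := by
    calc φ (G.submatrix (midEmb m) (midEmb m)).det
        = (φ.mapMatrix (G.submatrix (midEmb m) (midEmb m))).det := RingHom.map_det _ _
      _ = ((φ.mapMatrix G).submatrix (midEmb m) (midEmb m)).det := rfl
      _ = (A.submatrix (midEmb m) (midEmb m)).det := by rw [hφG]
  rw [hadj, hadj, hadj, hadj, hdet, hsub] at key
  exact key


lemma succ_strictMono' (m : ℕ) : StrictMono (Fin.succ : Fin (m+1) → Fin (m+2)) :=
  fun _ _ h => Fin.succ_lt_succ_iff.mpr h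

lemma castSucc_strictMono' (m : ℕ) : StrictMono (Fin.castSucc : Fin (m+1) → Fin (m+2)) :=
  fun _ _ h => Fin.castSucc_lt_castSucc_iff.mpr h

open Matrix in
theorem test {m : ℕ} {α : Type*} [CommRing α]
    (A : Matrix (Fin (m+2)) (Fin (m+2)) α) :
    minor A Finset.univ Finset.univ *
        minor A (Finset.univ \ {0, Fin.last (m+1)}) (Finset.univ \ {0, Fin.last (m+1)}) =
      minor A (Finset.univ \ {0}) (Finset.univ \ {(0 : Fin (m+2))}) *
          minor A (Finset.univ \ {Fin.last (m+1)}) (Finset.univ \ {Fin.last (m+1)}) -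
        minor A (Finset.univ \ {Fin.last (m+1)}) (Finset.univ \ {(0 : Fin (m+2))}) *
          minor A (Finset.univ \ {0}) (Finset.univ \ {Fin.last (m+1)}) := by
  classical
  have h0l : (0 : Fin (m+2)) ≠ Fin.last (m+1) := by simp [Fin.ext_iff]
  have hcu : (Finset.univ : Finset (Fin (m+2))).card = m + 2 := by simp
  have hc0 : ((Finset.univ : Finset (Fin (m+2))) \ {0}).card = m + 1 := by
    rw [Finset.card_sdiff_of_subset (by simp)]; simp
  have hcl : ((Finset.univ : Finset (Fin (m+2))) \ {Fin.last (m+1)}).card = m + 1 := by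
    rw [Finset.card_sdiff_of_subset (by simp)]; simp
  have hcm : ((Finset.univ : Finset (Fin (m+2))) \ {0, Fin.last (m+1)}).card = m := by
    rw [Finset.card_sdiff_of_subset (by simp)]
    rw [Finset.card_insert_of_notMem (by simp [h0l]), Finset.card_singleton]
    simp
  have hmem0 : ∀ i : Fin (m+1), (Fin.succ i : Fin (m+2)) ∈ Finset.univ \ {0} := by
    intro i; simp [Fin.succ_ne_zero]
  have hmeml : ∀ i : Fin (m+1), (Fin.castSucc i : Fin (m+2)) ∈ Finset.univ \ {Fin.last (m+1)} := by
    intro i; simp [Fin.ext_iff]; omega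
  have hmemm : ∀ i : Fin m, midEmb m i ∈ Finset.univ \ {0, Fin.last (m+1)} := by
    intro i; simp [midEmb_ne_zero i, midEmb_ne_last i]
  rw [minor_eq_det A hcu hcu strictMono_id strictMono_id (fun i => Finset.mem_univ _)
      (fun i => Finset.mem_univ _),
    minor_eq_det A hcm hcm (midEmb_strictMono m) (midEmb_strictMono m) hmemm hmemm,
    minor_eq_det A hc0 hc0 (succ_strictMono' m) (succ_strictMono' m) hmem0 hmem0,
    minor_eq_det A hcl hcl (castSucc_strictMono' m) (castSucc_strictMono' m) hmeml hmeml,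
    minor_eq_det A hcl hc0 (castSucc_strictMono' m) (succ_strictMono' m) hmeml hmem0,
    minor_eq_det A hc0 hcl (succ_strictMono' m) (castSucc_strictMono' m) hmem0 hmeml]
  have star2eq := star2 A
  rw [Matrix.adjugate_fin_succ_eq_det_submatrix, Matrix.adjugate_fin_succ_eq_det_submatrix,
    Matrix.adjugate_fin_succ_eq_det_submatrix, Matrix.adjugate_fin_succ_eq_det_submatrix,
    Fin.succAbove_last, Fin.succAbove_zero] at star2eq
  simp only [Fin.val_zero, Fin.val_last, pow_zero, one_mul, add_zero, zero_add] at star2eq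
  rw [show (-1 : α) ^ (m + 1 + (m + 1)) = 1 from Even.neg_one_pow ⟨m+1, rfl⟩, one_mul] at star2eq
  have hid : A.submatrix (id : Fin (m+2) → Fin (m+2)) id = A := rfl
  rw [hid]
  have hs : ((-1:α)^(m+1)) * ((-1:α)^(m+1)) = 1 := by
    rw [← pow_add]; exact Even.neg_one_pow ⟨m+1, rfl⟩
  set X := (A.submatrix (Fin.castSucc : Fin (m+1) → Fin (m+2)) Fin.succ).det
  set Y := (A.submatrix (Fin.succ : Fin (m+1) → Fin (m+2)) Fin.castSucc).det
  linear_combination (-1 : α) * star2eq - X * Y * hs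


/-- Jacobi's identity
ξ^{1..n}_{1..n} ξ^{2..n−1}_{2..n−1}
  = ξ^{2..n}_{2..n} ξ^{1..n−1}_{1..n−1} − ξ^{1..n−1}_{2..n} ξ^{2..n}_{1..n−1}. -/
theorem stmt7 {n : ℕ} {α : Type*} [CommRing α] (hn : 2 ≤ n)
    (A : Matrix (Fin n) (Fin n) α) :
    minor A Finset.univ Finset.univ *
        minor A (Finset.univ \ {⟨0, by omega⟩, ⟨n - 1, by omega⟩})
          (Finset.univ \ {⟨0, by omega⟩, ⟨n - 1, by omega⟩}) =
      minor A (Finset.univ \ {⟨0, by omega⟩}) (Finset.univ \ {(⟨0, by omega⟩ : Fin n)}) *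
          minor A (Finset.univ \ {⟨n - 1, by omega⟩}) (Finset.univ \ {(⟨n - 1, by omega⟩ : Fin n)}) -
        minor A (Finset.univ \ {⟨n - 1, by omega⟩}) (Finset.univ \ {(⟨0, by omega⟩ : Fin n)}) *
          minor A (Finset.univ \ {⟨0, by omega⟩}) (Finset.univ \ {(⟨n - 1, by omega⟩ : Fin n)}) := by
  obtain ⟨m, rfl⟩ : ∃ m, n = m + 2 := ⟨n - 2, by omega⟩
  exact test A
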